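/- Let ℓ be an odd positive integer and let r = (ℓ+1)/2. Let B be the r × r matrix whose (i,j)-entry (for 1 ≤ i, j ≤ r) is the double factorial (2(i+j) − 3)!!. Then det(B) equals the product of j! over all odd integers j with 1 ≤ j ≤ ℓ; that is, det(B) = ∏_{j odd, 1 ≤ j ≤ ℓ} j!. -/

import Mathlib

open Nat Finset Matrix

namespace Stmt7Aux

/-- `Q k = (2k+1)!!` as a rational number. -/
def Q (k : ℕ) : ℚ := (Nat.doubleFactorial (2 * k + 1) : ℚ)

lemma Q_pos (k : ℕ) : 0 < Q k := by
  unfold Q; exact_mod_cast Nat.doubleFactorial_pos _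

lemma Q_ne (k : ℕ) : Q k ≠ 0 := (Q_pos k).ne'

lemma Q_zero : Q 0 = 1 := rfl

lemma Q_succ (k : ℕ) : Q (k + 1) = (2 * (k : ℚ) + 3) * Q k := by
  unfold Q
  have h : 2 * (k + 1) + 1 = (2 * k + 1) + 2 := by ring
  rw [h, Nat.doubleFactorial_add_two]
  push_cast; ring

lemma choose_q (i m : ℕ) :
    (Nat.choose i (m + 1) : ℚ) = Nat.choose i m * ((i : ℚ) - m) / (m + 1) := by
  have hm1 : ((m : ℚ) + 1) ≠ 0 := by positivity
  rcases le_or_gt (m + 1) i with h | h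
  · have h' := Nat.choose_succ_right_eq i m
    have hmi : m ≤ i := le_of_succ_le h
    have hc : ((i.choose (m + 1)) * ((m : ℚ) + 1)) = i.choose m * ((i : ℚ) - m) := by
      have := congrArg (Nat.cast : ℕ → ℚ) h'
      push_cast [Nat.cast_sub hmi] at this
      linarith [this]
    field_simp
    linarith [hc]
  · rw [Nat.choose_eq_zero_of_lt h]
    rcases lt_or_ge i m with h2 | h2
    · rw [Nat.choose_eq_zero_of_lt h2]; simp
    · have : i = m := by omega
      subst this; simp

/-- The term in the LDLᵀ expansion. -/
def T (i j k : ℕ) : ℚ :=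
  (Nat.choose i k : ℚ) * Nat.choose j k * 2 ^ k * Nat.factorial k * Q i * Q j / Q k

lemma T_eq_zero_left {i j k : ℕ} (h : i < k) : T i j k = 0 := by
  unfold T; rw [Nat.choose_eq_zero_of_lt h]; simp

/-- Auxiliary telescoping sequence. -/
def W (i j : ℕ) : ℕ → ℚ
  | 0 => 0
  | (k + 1) => (2 * (k : ℚ) - 2 * j) * Nat.choose i k * Nat.choose j k *
      2 ^ k * Nat.factorial k * Q i * Q j / Q k

lemma W_zero (i j : ℕ) : W i j 0 = 0 := rfl

lemma W_succ (i j k : ℕ) : W i j (k + 1) = (2 * (k : ℚ) - 2 * j) * Nat.choose i k *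
    Nat.choose j k * 2 ^ k * Nat.factorial k * Q i * Q j / Q k := rfl

set_option maxHeartbeats 1000000 in
lemma step (i j k : ℕ) :
    T (i + 1) j k - (2 * (i : ℚ) + 2 * j + 3) * T i j k = W i j (k + 1) - W i j k := by
  cases k with
  | zero =>
    simp only [T, W_zero, W_succ, Q_zero, Q_succ, Nat.choose_zero_right,
      Nat.factorial_zero, pow_zero, Nat.cast_one, div_one, mul_one, one_mul,
      Nat.cast_zero]
    ring
  | succ m =>
    have hm : ((m : ℚ) + 1) ≠ 0 := by positivity
    have h23 : (2 * (m : ℚ) + 3) ≠ 0 := by positivity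
    have hQm := Q_ne m
    simp only [T, W_succ, Q_succ, Nat.succ_eq_add_one, Nat.choose_succ_succ i m,
      choose_q i m, choose_q j m, Nat.factorial_succ, pow_succ]
    push_cast [choose_q]
    generalize (Nat.choose i m : ℚ) = x
    generalize (Nat.choose j m : ℚ) = y
    generalize (Nat.factorial m : ℚ) = fm
    generalize (2 : ℚ) ^ m = f2
    generalize hqm2 : Q m = qm at hQm ⊢
    generalize hmm : (m : ℚ) = mm at hm h23 ⊢
    have h23' : (3 + mm * 2) ≠ 0 := by rw [add_comm, mul_comm]; exact h23
    field_simp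
    ring_nf
    field_simp
    ring

lemma key (i : ℕ) : ∀ j : ℕ, ∑ k ∈ range (i + j + 1), T i j k = Q (i + j) := by
  induction i with
  | zero =>
    intro j
    rw [Finset.sum_eq_single 0]
    · unfold T
      rw [Q_zero]
      norm_num
    · intro k _ hk
      exact T_eq_zero_left (by omega)
    · intro h; simp at h
  | succ i ih =>
    intro j
    have tel : ∑ k ∈ range (i + j + 2),
        (T (i + 1) j k - (2 * (i : ℚ) + 2 * j + 3) * T i j k) =
        W i j (i + j + 2) - W i j 0 := by
      calc ∑ k ∈ range (i + j + 2),
            (T (i + 1) j k - (2 * (i : ℚ) + 2 * j + 3) * T i j k)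
          = ∑ k ∈ range (i + j + 2), (W i j (k + 1) - W i j k) :=
            Finset.sum_congr rfl (fun k _ => step i j k)
        _ = W i j (i + j + 2) - W i j 0 := Finset.sum_range_sub (W i j) _
    have hWtop : W i j (i + j + 2) = 0 := by
      have h2 : i + j + 2 = (i + j + 1) + 1 := by omega
      rw [h2, W_succ, Nat.choose_eq_zero_of_lt (show i < i + j + 1 by omega)]
      simp
    rw [Finset.sum_sub_distrib, ← Finset.mul_sum, hWtop, W_zero, sub_zero,
      sub_eq_zero] at tel
    have hext : ∑ k ∈ range (i + j + 2), T i j k = ∑ k ∈ range (i + j + 1), T i j k := by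
      rw [Finset.sum_range_succ, T_eq_zero_left (by omega), add_zero]
    have hsum : ∑ k ∈ range (i + 1 + j + 1), T (i + 1) j k
        = ∑ k ∈ range (i + j + 2), T (i + 1) j k := by
      have : i + 1 + j + 1 = i + j + 2 := by omega
      rw [this]
    rw [hsum, tel, hext, ih j, show (i + 1 + j) = (i + j) + 1 from by omega, Q_succ]
    push_cast
    ring

lemma sum_T_ext (i j : ℕ) {a b : ℕ} (ha : i < a) (hab : a ≤ b) :
    ∑ k ∈ range b, T i j k = ∑ k ∈ range a, T i j k := by
  rw [← Finset.sum_range_add_sum_Ico _ hab]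
  have h0 : ∑ k ∈ Finset.Ico a b, T i j k = 0 :=
    Finset.sum_eq_zero fun k hk =>
      T_eq_zero_left (lt_of_lt_of_le ha (Finset.mem_Ico.mp hk).1)
  rw [h0, add_zero]

lemma sum_range_T (i j n : ℕ) (h : i < n) : ∑ k ∈ range n, T i j k = Q (i + j) := by
  rcases le_total n (i + j + 1) with hle | hle
  · rw [← sum_T_ext i j h hle]
    exact key i j
  · rw [sum_T_ext i j (by omega) hle]
    exact key i j

lemma fact_odd (k : ℕ) : (2 * k + 1)! = 2 ^ k * k ! * (2 * k + 1)‼ := by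
  rw [Nat.factorial_eq_mul_doubleFactorial (2 * k), Nat.doubleFactorial_two_mul]
  ring

lemma filter_odd_succ (m : ℕ) :
    (Finset.Icc 1 (2 * m + 3)).filter (fun j => Odd j)
      = insert (2 * m + 3) ((Finset.Icc 1 (2 * m + 1)).filter (fun j => Odd j)) := by
  ext a
  simp only [Finset.mem_filter, Finset.mem_Icc, Finset.mem_insert, Nat.odd_iff]
  omega

lemma prod_odd_factorial (m : ℕ) :
    ∏ k ∈ range (m + 1), Nat.factorial (2 * k + 1)
      = ∏ j ∈ (Finset.Icc 1 (2 * m + 1)).filter (fun j => Odd j), Nat.factorial j := by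
  induction m with
  | zero => decide
  | succ m ih =>
    have h1 : 2 * (m + 1) + 1 = 2 * m + 3 := by ring
    rw [Finset.prod_range_succ, ih, h1, filter_odd_succ,
      Finset.prod_insert (by simp [Nat.odd_iff])]
    ring

end Stmt7Aux

open Stmt7Aux

/-- For odd positive ℓ and r = (ℓ+1)/2, the r × r matrix B with (i,j)-entry (1 ≤ i,j ≤ r)
equal to (2(i+j) − 3)!! has determinant ∏_{j odd, 1 ≤ j ≤ ℓ} j!. -/
theorem stmt7 (ℓ : ℕ) (hpos : 0 < ℓ) (hodd : Odd ℓ) :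
    (Matrix.of fun i j : Fin ((ℓ + 1) / 2) =>
        (Nat.doubleFactorial (2 * i.val + 2 * j.val + 1) : ℤ)).det =
      ∏ j ∈ (Finset.Icc 1 ℓ).filter (fun j => Odd j), (Nat.factorial j : ℤ) := by
  obtain ⟨m, rfl⟩ := hodd
  have hr : (2 * m + 1 + 1) / 2 = m + 1 := by omega
  set r := (2 * m + 1 + 1) / 2 with hrdef
  set M : Matrix (Fin r) (Fin r) ℤ :=
    Matrix.of fun i j : Fin r =>
      (Nat.doubleFactorial (2 * i.val + 2 * j.val + 1) : ℤ) with hM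
  apply Int.cast_injective (α := ℚ)
  set L : Matrix (Fin r) (Fin r) ℚ :=
    Matrix.of fun i k : Fin r => (Nat.choose i.val k.val : ℚ) * Q i.val / Q k.val with hL
  set d : Fin r → ℚ := fun k => 2 ^ k.val * (Nat.factorial k.val : ℚ) * Q k.val with hd
  have hmap : M.map (Int.cast : ℤ → ℚ) = L * Matrix.diagonal d * Lᵀ := by
    ext i j
    have hterm : ∀ k : Fin r,
        (L i k * d k) * L j k = T i.val j.val k.val := by
      intro k
      simp only [hL, hd, Matrix.of_apply, T]
      have := Q_ne k.val
      field_simp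
    calc (M.map (Int.cast : ℤ → ℚ)) i j
        = ((Nat.doubleFactorial (2 * i.val + 2 * j.val + 1) : ℤ) : ℚ) := rfl
      _ = Q (i.val + j.val) := by
          rw [show 2 * i.val + 2 * j.val + 1 = 2 * (i.val + j.val) + 1 from by ring]
          unfold Q
          norm_cast
      _ = ∑ k ∈ range r, T i.val j.val k := (sum_range_T _ _ _ i.isLt).symm
      _ = ∑ k : Fin r, T i.val j.val k.val := (Fin.sum_univ_eq_sum_range _ _).symm
      _ = ∑ k : Fin r, (L i k * d k) * L j k :=
          Finset.sum_congr rfl fun k _ => (hterm k).symm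
      _ = (L * Matrix.diagonal d * Lᵀ) i j := by
          rw [Matrix.mul_apply]
          exact Finset.sum_congr rfl fun k _ => by
            rw [Matrix.mul_diagonal, Matrix.transpose_apply]
  have hLtri : L.BlockTriangular OrderDual.toDual := by
    intro i j hij
    have hij' : i < j := hij
    have hij'' : i.val < j.val := hij'
    simp [hL, Nat.choose_eq_zero_of_lt hij'']
  have hLdet : L.det = 1 := by
    rw [Matrix.det_of_lowerTriangular L hLtri]
    refine Finset.prod_eq_one fun i _ => ?_
    simp [hL, div_self (Q_ne i.val)]
  have hdet : ((M.det : ℤ) : ℚ) = ∏ k : Fin r, d k := by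
    have h1 : ((M.det : ℤ) : ℚ) = (M.map (Int.cast : ℤ → ℚ)).det :=
      RingHom.map_det (Int.castRingHom ℚ) M
    rw [h1, hmap, Matrix.det_mul, Matrix.det_mul, hLdet, Matrix.det_transpose, hLdet,
      Matrix.det_diagonal]
    ring
  rw [hdet]
  have hprod : ∏ k : Fin r, d k
      = ((∏ k ∈ range (m + 1), Nat.factorial (2 * k + 1) : ℕ) : ℚ) := by
    rw [hd, Fin.prod_univ_eq_prod_range (fun k => 2 ^ k * (Nat.factorial k : ℚ) * Q k) r,
      hr]
    push_cast
    refine Finset.prod_congr rfl fun k _ => ?_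
    rw [fact_odd k]
    unfold Q
    push_cast
    ring
  rw [hprod, prod_odd_factorial m]
  push_cast
  rfl
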